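/- Take K = ℂ(q), the field of rational functions over ℂ, with q the indeterminate. For every n ≥ 1, every polynomial p ∈ K[x_1,…,x_n] can be written as p = h + s where h is q-hit and s is classical-harmonic; that is, the q-hit polynomials together with the classical harmonics span all of K[x_1,…,x_n]. -/

import Mathlib

open MvPolynomial

/-- The `q`-Steenrod operator `P_k` on `K[x_1,…,x_n]`:
`P_k(p) = ∑ i, x_i^k • (p + q • x_i • ∂p/∂x_i)`. -/
noncomputable def steenrodP (K : Type) [Field K] (q : K) (n k : ℕ) :
    Module.End K (MvPolynomial (Fin n) K) :=
  ∑ i : Fin n, (LinearMap.mulLeft K (X i ^ k : MvPolynomial (Fin n) K)) ∘ₗ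
    (LinearMap.id + q • ((LinearMap.mulLeft K (X i : MvPolynomial (Fin n) K)) ∘ₗ
      (pderiv i).toLinearMap))


/-- The dual `q`-Steenrod operator `P_k^*` on `K[x_1,…,x_n]`:
`P_k^*(p) = ∑ i, (∂^k p/∂x_i^k + q • x_i • ∂^{k+1} p/∂x_i^{k+1})`. -/
noncomputable def steenrodPdual (K : Type) [Field K] (q : K) (n k : ℕ) :
    Module.End K (MvPolynomial (Fin n) K) :=
  ∑ i : Fin n,
    ((((pderiv i).toLinearMap : Module.End K (MvPolynomial (Fin n) K)) ^ k)
      + q • ((LinearMap.mulLeft K (X i : MvPolynomial (Fin n) K)) ∘ₗ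
          ((((pderiv i).toLinearMap : Module.End K (MvPolynomial (Fin n) K)) ^ (k+1) : Module.End K (MvPolynomial (Fin n) K)) : MvPolynomial (Fin n) K →ₗ[K] MvPolynomial (Fin n) K)))

/-- The bilinear form `B(p,r) = ∑_m m! ⬝ p_m ⬝ r_m` over exponent vectors `m`. -/
noncomputable def formB {K : Type} [Field K] {n : ℕ} (p r : MvPolynomial (Fin n) K) : K :=
  ∑ m ∈ p.support, (∏ i, ((m i).factorial : K)) * p.coeff m * r.coeff m

/-- `p` is `q`-harmonic if it is killed by all the dual `q`-Steenrod operators. -/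
def IsQHarmonic {K : Type} [Field K] {n : ℕ} (q : K) (p : MvPolynomial (Fin n) K) : Prop :=
  ∀ k : ℕ, 1 ≤ k → steenrodPdual K q n k p = 0

/-- The space of `q`-hit polynomials: the span of the ranges of the `P_k`, `k ≥ 1`. -/
noncomputable def qHit (K : Type) [Field K] (q : K) (n : ℕ) :
    Submodule K (MvPolynomial (Fin n) K) :=
  Submodule.span K (⋃ k ∈ {k : ℕ | 1 ≤ k}, Set.range (steenrodP K q n k))

/-- For a list `λ = [λ_1, …, λ_m]`, the operator `P_λ = P_{λ_1} ∘ ⋯ ∘ P_{λ_m}`. -/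
noncomputable def steenrodPList (K : Type) [Field K] (q : K) (n : ℕ) (l : List ℕ) :
    Module.End K (MvPolynomial (Fin n) K) :=
  (l.map (steenrodP K q n)).prod

namespace QHitProof

noncomputable section

variable {n : ℕ}

abbrev MvP (n : ℕ) (R : Type*) [CommRing R] := MvPolynomial (Fin n) R

def deg (m : Fin n →₀ ℕ) : ℕ := m.sum fun _ e => e

lemma deg_add (a b : Fin n →₀ ℕ) : deg (a + b) = deg a + deg b :=
  Finsupp.sum_add_index' (fun _ => rfl) (fun _ _ _ => rfl)

lemma deg_single (i : Fin n) (k : ℕ) : deg (Finsupp.single i k) = k :=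
  Finsupp.sum_single_index rfl

lemma apply_le_deg (m : Fin n →₀ ℕ) (i : Fin n) : m i ≤ deg m := by
  by_cases h : i ∈ m.support
  · exact Finset.single_le_sum (f := fun j => m j) (fun _ _ => Nat.zero_le _) h
  · simp [Finsupp.notMem_support_iff.mp h]



def expF (n d : ℕ) : Finset (Fin n →₀ ℕ) :=
  ((Fintype.piFinset fun _ : Fin n => Finset.range (d+1)).map
    (Finsupp.equivFunOnFinite.symm.toEmbedding)).filter fun m => deg m ≤ d

lemma mem_expF {d : ℕ} {m : Fin n →₀ ℕ} : m ∈ expF n d ↔ deg m ≤ d := by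
  constructor
  · exact fun h => (Finset.mem_filter.mp h).2
  · intro h
    refine Finset.mem_filter.mpr ⟨Finset.mem_map.mpr ⟨Finsupp.equivFunOnFinite m, ?_, by simp⟩, h⟩
    exact Fintype.mem_piFinset.mpr fun i =>
      Finset.mem_range.mpr (Nat.lt_succ_of_le ((apply_le_deg m i).trans h))

def hitIdx (n d : ℕ) : Finset (ℕ × (Fin n →₀ ℕ)) :=
  ((Finset.Icc 1 d) ×ˢ expF n d).filter fun km => km.1 + deg km.2 ≤ d

lemma mem_hitIdx {d k : ℕ} {m : Fin n →₀ ℕ} :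
    (k, m) ∈ hitIdx n d ↔ 1 ≤ k ∧ k + deg m ≤ d := by
  constructor
  · intro h
    obtain ⟨h1, h2⟩ := Finset.mem_filter.mp h
    exact ⟨(Finset.mem_Icc.mp (Finset.mem_product.mp h1).1).1, h2⟩
  · intro ⟨h1, h2⟩
    have hkd : k ≤ d := by omega
    have hmd : deg m ≤ d := by omega
    exact Finset.mem_filter.mpr ⟨Finset.mem_product.mpr
      ⟨Finset.mem_Icc.mpr ⟨h1, hkd⟩, mem_expF.mpr hmd⟩, h2⟩

section Ops

variable {R S : Type*} [CommRing R] [CommRing S]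

def pdL (R : Type*) [CommRing R] (i : Fin n) : Module.End R (MvP n R) := (pderiv i).toLinearMap

lemma pdL_apply (i : Fin n) (f : MvP n R) : pdL R i f = pderiv i f := rfl

def dOp (R : Type*) [CommRing R] (n k : ℕ) : Module.End R (MvP n R) :=
  ∑ i : Fin n, (pdL R i) ^ k

lemma dOp_apply (k : ℕ) (f : MvP n R) : dOp R n k f = ∑ i : Fin n, ((pdL R i) ^ k) f := by
  rw [dOp, LinearMap.sum_apply]

def NOp (R : Type*) [CommRing R] (n d : ℕ) : MvP n R →ₗ[R] (Fin d → MvP n R) :=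
  LinearMap.pi fun k => dOp R n (k.1 + 1)

lemma NOp_apply (d : ℕ) (f : MvP n R) (k : Fin d) : NOp R n d f k = dOp R n (k.1 + 1) f := rfl

def hv (R : Type*) [CommRing R] (q : R) (k : ℕ) (m : Fin n →₀ ℕ) : MvP n R :=
  ∑ i : Fin n, monomial (m + Finsupp.single i k) (1 + m i • q)

lemma coeff_pderiv (i : Fin n) (f : MvP n R) (m : Fin n →₀ ℕ) :
    coeff m (pderiv i f) = coeff (m + Finsupp.single i 1) f * ((m i : R) + 1) := by
  induction f using MvPolynomial.induction_on' with
  | add p q hp hq => simp [map_add, coeff_add, hp, hq, add_mul]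
  | monomial b a =>
    rw [pderiv_monomial, coeff_monomial, coeff_monomial]
    by_cases hb : b i = 0
    · have h2 : b ≠ m + Finsupp.single i 1 := by
        intro h
        rw [h] at hb
        simp [Finsupp.add_apply] at hb
      rw [if_neg h2, zero_mul, hb]
      split_ifs <;> simp
    · have hb' : (1 : ℕ) ≤ b i := Nat.one_le_iff_ne_zero.mpr hb
      have key : b - Finsupp.single i 1 = m ↔ b = m + Finsupp.single i 1 := by
        constructor
        · intro h
          rw [← h, tsub_add_cancel_of_le (Finsupp.single_le_iff.mpr hb')]
        · intro h
          rw [h, add_tsub_cancel_right]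
      by_cases h : b = m + Finsupp.single i 1
      · rw [if_pos (key.mpr h), if_pos h]
        have hbi : b i = m i + 1 := by simp [h, Finsupp.add_apply]
        rw [hbi]
        push_cast
        ring
      · rw [if_neg fun hh => h (key.mp hh), if_neg h, zero_mul]

lemma mem_support_pderiv {i : Fin n} {f : MvP n R} {m : Fin n →₀ ℕ}
    (h : m ∈ (pderiv i f).support) : m + Finsupp.single i 1 ∈ f.support := by
  rw [mem_support_iff] at h ⊢
  intro h0
  rw [coeff_pderiv, h0, zero_mul] at h
  exact h rfl

lemma totalDegree_pderiv_le (i : Fin n) (f : MvP n R) {t : ℕ} (hf : totalDegree f ≤ t + 1) :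
    totalDegree (pderiv i f) ≤ t := by
  refine Finset.sup_le fun m hm => ?_
  have h2 : deg (m + Finsupp.single i 1) ≤ totalDegree f :=
    le_totalDegree (mem_support_pderiv hm)
  have h3 : deg (m + Finsupp.single i 1) = deg m + 1 := by rw [deg_add, deg_single]
  show deg m ≤ t
  omega

lemma pderiv_eq_zero_of_totalDegree_eq_zero {i : Fin n} {f : MvP n R}
    (hf : totalDegree f = 0) : pderiv i f = 0 := by
  apply MvPolynomial.ext
  intro m
  rw [coeff_pderiv, coeff_zero]
  have hns : m + Finsupp.single i 1 ∉ f.support := by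
    intro h
    have h2 : deg (m + Finsupp.single i 1) ≤ totalDegree f := le_totalDegree h
    have h3 : deg (m + Finsupp.single i 1) = deg m + 1 := by rw [deg_add, deg_single]
    rw [hf] at h2
    omega
  rw [notMem_support_iff.mp hns, zero_mul]

lemma pdPow_eq_zero {i : Fin n} {k : ℕ} {f : MvP n R} (h : totalDegree f < k) :
    ((pdL R i) ^ k) f = 0 := by
  induction k generalizing f with
  | zero => exact absurd h (Nat.not_lt_zero _)
  | succ k ih =>
    rw [pow_succ, Module.End.mul_apply]
    rcases Nat.eq_zero_or_pos k with hk | hk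
    · subst hk
      rw [pow_zero, Module.End.one_apply, pdL_apply]
      exact pderiv_eq_zero_of_totalDegree_eq_zero (Nat.lt_one_iff.mp h)
    · apply ih
      have h2 : totalDegree (pderiv i f) ≤ k - 1 :=
        totalDegree_pderiv_le i f (t := k - 1) (by omega)
      rw [pdL_apply]
      omega

lemma mem_support_pdPow {i : Fin n} {k : ℕ} {f : MvP n R} {m : Fin n →₀ ℕ}
    (h : m ∈ (((pdL R i) ^ k) f).support) : m + Finsupp.single i k ∈ f.support := by
  induction k generalizing f with
  | zero => simpa using h
  | succ k ih =>
    rw [pow_succ, Module.End.mul_apply] at h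
    have h2 := ih (f := pdL R i f) h
    have h3 := mem_support_pderiv (f := f) (i := i) h2
    rwa [add_assoc, ← Finsupp.single_add] at h3

lemma coeff_dOp_eq_zero {t k : ℕ} {f : MvP n R} (hf : totalDegree f ≤ t) {m : Fin n →₀ ℕ}
    (hm : t < k + deg m) : coeff m (dOp R n k f) = 0 := by
  rw [dOp_apply, MvPolynomial.coeff_sum]
  refine Finset.sum_eq_zero fun i _ => ?_
  by_contra hne
  have h1 : deg (m + Finsupp.single i k) ≤ totalDegree f :=
    le_totalDegree (mem_support_pdPow (mem_support_iff.mpr hne))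
  have h3 : deg (m + Finsupp.single i k) = deg m + k := by rw [deg_add, deg_single]
  omega

lemma dOp_eq_zero_of_lt {k : ℕ} {f : MvP n R} (h : totalDegree f < k) :
    dOp R n k f = 0 := by
  rw [dOp_apply]
  exact Finset.sum_eq_zero fun i _ => pdPow_eq_zero h

lemma map_pdPow (φ : R →+* S) (i : Fin n) (k : ℕ) (f : MvP n R) :
    map φ (((pdL R i) ^ k) f) = ((pdL S i) ^ k) (map φ f) := by
  induction k generalizing f with
  | zero => simp
  | succ k ih =>
    rw [pow_succ, Module.End.mul_apply, pow_succ, Module.End.mul_apply, pdL_apply, pdL_apply,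
      pderiv_map, ih]

lemma map_dOp (φ : R →+* S) (k : ℕ) (f : MvP n R) :
    map φ (dOp R n k f) = dOp S n k (map φ f) := by
  rw [dOp_apply, dOp_apply, map_sum]
  exact Finset.sum_congr rfl fun i _ => map_pdPow φ i k f

lemma map_hv (φ : R →+* S) (q : R) (k : ℕ) (m : Fin n →₀ ℕ) :
    map φ (hv R q k m) = hv S (φ q) k m := by
  rw [hv, hv, map_sum]
  refine Finset.sum_congr rfl fun i _ => ?_
  rw [map_monomial]
  congr 1
  rw [map_add, map_one, map_nsmul]

lemma map_smul_C (φ : R →+* S) (c : R) (f : MvP n R) :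
    map φ (c • f) = φ c • map φ f := by
  rw [smul_eq_C_mul, smul_eq_C_mul, map_mul, map_C]

end Ops

section Connect

variable {K : Type} [Field K]

lemma steenrodP_monomial (q : K) (k : ℕ) (m : Fin n →₀ ℕ) :
    steenrodP K q n k (monomial m 1) = hv K q k m := by
  rw [steenrodP, LinearMap.sum_apply, hv]
  refine Finset.sum_congr rfl fun i _ => ?_
  rw [LinearMap.comp_apply, LinearMap.add_apply, LinearMap.id_apply, LinearMap.smul_apply,
    LinearMap.comp_apply, LinearMap.mulLeft_apply, LinearMap.mulLeft_apply]
  rw [show ((pderiv i).toLinearMap (monomial m (1:K))) = pderiv i (monomial m 1) from rfl,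
    pderiv_monomial]
  by_cases h : m i = 0
  · rw [h]
    simp only [Nat.cast_zero, one_mul, monomial_zero, mul_zero, smul_zero, add_zero,
      zero_smul]
    rw [X_pow_eq_monomial, monomial_mul, one_mul, add_comm]
  · have h1 : (1:ℕ) ≤ m i := Nat.one_le_iff_ne_zero.mpr h
    have hx : X i * monomial (m - Finsupp.single i 1) ((1:K) * (m i : K)) = monomial m (m i : K) := by
      rw [one_mul, X, monomial_mul, one_mul,
        add_tsub_cancel_of_le (Finsupp.single_le_iff.mpr h1)]
    rw [hx, smul_monomial, ← map_add, X_pow_eq_monomial, monomial_mul, one_mul, add_comm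
      (Finsupp.single i k) m]
    congr 1
    rw [smul_eq_mul, nsmul_eq_mul, mul_comm]

lemma steenrodPdual_zero (k : ℕ) :
    steenrodPdual K (0:K) n k = dOp K n k := by
  rw [steenrodPdual, dOp]
  refine Finset.sum_congr rfl fun i _ => ?_
  rw [zero_smul, add_zero]
  rfl

end Connect

section FormB

variable {F : Type} [Field F]

def fact (F : Type) [Field F] (m : Fin n →₀ ℕ) : F := ∏ i, ((m i).factorial : F)

lemma fact_ne_zero [CharZero F] (m : Fin n →₀ ℕ) : fact F m ≠ 0 :=
  Finset.prod_ne_zero_iff.mpr fun i _ => Nat.cast_ne_zero.mpr (Nat.factorial_ne_zero _)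

lemma formB_def (p r : MvP n F) :
    formB p r = ∑ m ∈ p.support, fact F m * coeff m p * coeff m r := rfl

lemma formB_eq_sum {p r : MvP n F} {s : Finset (Fin n →₀ ℕ)} (hs : p.support ⊆ s) :
    formB p r = ∑ m ∈ s, fact F m * coeff m p * coeff m r := by
  rw [formB_def]
  exact Finset.sum_subset hs fun m _ hm => by rw [notMem_support_iff.mp hm]; ring

lemma formB_add_left (p q r : MvP n F) : formB (p + q) r = formB p r + formB q r := by
  set s := (p + q).support ∪ (p.support ∪ q.support) with hs
  rw [formB_eq_sum (s := s) Finset.subset_union_left,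
    formB_eq_sum (s := s) ((Finset.subset_union_left).trans Finset.subset_union_right),
    formB_eq_sum (s := s) ((Finset.subset_union_right).trans Finset.subset_union_right),
    ← Finset.sum_add_distrib]
  exact Finset.sum_congr rfl fun m _ => by rw [coeff_add]; ring

lemma formB_smul_left (c : F) (p r : MvP n F) : formB (c • p) r = c * formB p r := by
  rw [formB_eq_sum (s := p.support) (MvPolynomial.support_smul), formB_def, Finset.mul_sum]
  exact Finset.sum_congr rfl fun m _ => by rw [coeff_smul, smul_eq_mul]; ring

lemma formB_add_right (p q r : MvP n F) : formB p (q + r) = formB p q + formB p r := by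
  rw [formB_def, formB_def, formB_def, ← Finset.sum_add_distrib]
  exact Finset.sum_congr rfl fun m _ => by rw [coeff_add]; ring

lemma formB_smul_right (c : F) (p r : MvP n F) : formB p (c • r) = c * formB p r := by
  rw [formB_def, formB_def, Finset.mul_sum]
  exact Finset.sum_congr rfl fun m _ => by rw [coeff_smul, smul_eq_mul]; ring

lemma formB_comm (p r : MvP n F) : formB p r = formB r p := by
  rw [formB_eq_sum (s := p.support ∪ r.support) Finset.subset_union_left,
    formB_eq_sum (s := p.support ∪ r.support) Finset.subset_union_right]
  exact Finset.sum_congr rfl fun m _ => by ring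

def BF (F : Type) [Field F] (n : ℕ) : MvP n F →ₗ[F] MvP n F →ₗ[F] F :=
  LinearMap.mk₂ F formB formB_add_left formB_smul_left formB_add_right formB_smul_right

lemma BF_apply (p r : MvP n F) : BF F n p r = formB p r := rfl

lemma formB_monomial_right (p : MvP n F) (m : Fin n →₀ ℕ) :
    formB p (monomial m 1) = fact F m * coeff m p := by
  rw [formB_def]
  simp only [coeff_monomial, mul_ite, mul_one, mul_zero]
  rw [Finset.sum_ite_eq p.support m (fun m' => fact F m' * coeff m' p)]
  by_cases h : m ∈ p.support
  · rw [if_pos h]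
  · rw [if_neg h, notMem_support_iff.mp h, mul_zero]

lemma formB_monomial_monomial (u w : Fin n →₀ ℕ) (c e : F) :
    formB (monomial u c) (monomial w e) = if u = w then fact F u * (c * e) else 0 := by
  classical
  rw [formB_def, support_monomial]
  by_cases hc : c = 0
  · rw [if_pos hc, hc]
    simp
  · rw [if_neg hc, Finset.sum_singleton, coeff_monomial, coeff_monomial, if_pos rfl]
    by_cases h : u = w
    · rw [if_pos h, if_pos (h.symm), mul_assoc]
    · rw [if_neg h, if_neg (fun hh => h hh.symm), mul_zero]

lemma fact_add_single (a : Fin n →₀ ℕ) (i : Fin n) :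
    fact F (a + Finsupp.single i 1) = ((a i + 1 : ℕ) : F) * fact F a := by
  have h1 : ∀ b : Fin n →₀ ℕ, fact F b
      = ((b i).factorial : F) * ∏ j ∈ Finset.univ.erase i, ((b j).factorial : F) :=
    fun b => (Finset.mul_prod_erase Finset.univ _ (Finset.mem_univ i)).symm
  rw [h1 (a + Finsupp.single i 1), h1 a]
  have h2 : ∏ j ∈ Finset.univ.erase i, (((a + Finsupp.single i 1 : Fin n →₀ ℕ) j).factorial : F)
      = ∏ j ∈ Finset.univ.erase i, ((a j).factorial : F) := by
    refine Finset.prod_congr rfl fun j hj => ?_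
    have hj2 : (a + Finsupp.single i 1 : Fin n →₀ ℕ) j = a j := by
      rw [Finsupp.add_apply, Finsupp.single_apply, if_neg (Finset.ne_of_mem_erase hj).symm,
        add_zero]
    rw [hj2]
  rw [h2]
  have h3 : (a + Finsupp.single i 1 : Fin n →₀ ℕ) i = a i + 1 := by
    rw [Finsupp.add_apply, Finsupp.single_apply, if_pos rfl]
  rw [h3, Nat.factorial_succ]
  push_cast
  ring

lemma formB_X_mul (i : Fin n) (f g : MvP n F) :
    formB (X i * f) g = formB f (pderiv i g) := by
  induction f using MvPolynomial.induction_on' with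
  | add p q hp hq => rw [mul_add, formB_add_left, formB_add_left, hp, hq]
  | monomial a c =>
    induction g using MvPolynomial.induction_on' with
    | add p q hp hq => rw [map_add, formB_add_right, formB_add_right, hp, hq]
    | monomial b e =>
      have hXm : X i * monomial a c = monomial (a + Finsupp.single i 1) c := by
        rw [X, monomial_mul, one_mul, add_comm]
      rw [hXm, pderiv_monomial, formB_monomial_monomial, formB_monomial_monomial]
      by_cases hb : b i = 0
      · have hne : a + Finsupp.single i 1 ≠ b := by
          intro h
          rw [← h, Finsupp.add_apply, Finsupp.single_apply, if_pos rfl] at hb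
          omega
        rw [if_neg hne, hb]
        split_ifs <;> simp
      · have hb' : (1:ℕ) ≤ b i := Nat.one_le_iff_ne_zero.mpr hb
        have key : a + Finsupp.single i 1 = b ↔ a = b - Finsupp.single i 1 := by
          constructor
          · intro h
            rw [← h, add_tsub_cancel_right]
          · intro h
            rw [h, tsub_add_cancel_of_le (Finsupp.single_le_iff.mpr hb')]
        by_cases h : a + Finsupp.single i 1 = b
        · rw [if_pos h, if_pos (key.mp h)]
          have hbi : b i = a i + 1 := by
            rw [← h, Finsupp.add_apply, Finsupp.single_apply, if_pos rfl]
          have hfa : fact F (a + Finsupp.single i 1) = ((a i + 1 : ℕ) : F) * fact F a :=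
            fact_add_single a i
          rw [hfa, hbi]
          push_cast
          ring
        · rw [if_neg h, if_neg (fun hh => h (key.mpr hh))]

lemma formB_X_pow_mul (i : Fin n) (k : ℕ) (f g : MvP n F) :
    formB (X i ^ k * f) g = formB f (((pdL F i) ^ k) g) := by
  induction k generalizing f with
  | zero => rw [pow_zero, pow_zero, one_mul, Module.End.one_apply]
  | succ k ih =>
    have h1 : X i ^ (k+1) * f = X i ^ k * (X i * f) := by ring
    rw [h1, ih, formB_X_mul, pow_succ', Module.End.mul_apply, pdL_apply]

lemma formB_hv0 (k : ℕ) (m : Fin n →₀ ℕ) (g : MvP n F) :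
    formB (hv F 0 k m) g = fact F m * coeff m (dOp F n k g) := by
  have h1 : hv F 0 k m = ∑ i : Fin n, X i ^ k * monomial m 1 := by
    rw [hv]
    refine Finset.sum_congr rfl fun i _ => ?_
    rw [smul_zero, add_zero, X_pow_eq_monomial, monomial_mul, one_mul, add_comm]
  have h2 : ∀ r : MvP n F, formB (∑ i : Fin n, X i ^ k * monomial m (1:F)) r
      = ∑ i : Fin n, formB (X i ^ k * monomial m 1) r := by
    intro r
    have := map_sum (BF F n) (fun i : Fin n => X i ^ k * monomial m (1:F)) Finset.univ
    calc formB (∑ i : Fin n, X i ^ k * monomial m (1:F)) r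
        = BF F n (∑ i : Fin n, X i ^ k * monomial m (1:F)) r := rfl
      _ = ∑ i : Fin n, BF F n (X i ^ k * monomial m (1:F)) r := by rw [this, LinearMap.sum_apply]
      _ = _ := rfl
  rw [h1, h2]
  have h3 : ∀ i : Fin n, formB (X i ^ k * monomial m (1:F)) g
      = formB (monomial m 1) (((pdL F i) ^ k) g) := fun i => formB_X_pow_mul i k _ g
  rw [Finset.sum_congr rfl fun i _ => h3 i]
  calc (∑ i : Fin n, formB (monomial m (1:F)) (((pdL F i) ^ k) g))
      = formB (monomial m 1) (dOp F n k g) := by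
        rw [dOp_apply]
        exact (map_sum (BF F n (monomial m 1)) (fun i : Fin n => ((pdL F i) ^ k) g)
          Finset.univ).symm
    _ = fact F m * coeff m (dOp F n k g) := by rw [formB_comm, formB_monomial_right]

end FormB

section Spans

variable {F : Type} [Field F]

def Vle (F : Type) [Field F] (n t : ℕ) : Submodule F (MvP n F) where
  carrier := {p | totalDegree p ≤ t}
  add_mem' := fun ha hb => le_trans (totalDegree_add _ _) (max_le ha hb)
  zero_mem' := by simp
  smul_mem' := fun c p hp => le_trans (totalDegree_smul_le c p) hp

lemma mem_Vle {t : ℕ} {p : MvP n F} : p ∈ Vle F n t ↔ totalDegree p ≤ t := Iff.rfl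

def monFam (F : Type) [Field F] (n d : ℕ) : ↥(expF n d) → MvP n F :=
  fun m => monomial m.1 1

lemma mem_span_monFam {d : ℕ} {p : MvP n F} (hp : totalDegree p ≤ d) :
    p ∈ Submodule.span F (Set.range (monFam F n d)) := by
  have hrep : (∑ m ∈ p.support, (coeff m p) • monomial m (1:F)) = p := by
    calc ∑ m ∈ p.support, (coeff m p) • monomial m (1:F)
        = ∑ m ∈ p.support, monomial m (coeff m p) :=
          Finset.sum_congr rfl fun m _ => by rw [smul_monomial, smul_eq_mul, mul_one]
      _ = p := support_sum_monomial_coeff p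
  rw [← hrep]
  refine Submodule.sum_mem _ fun m hm => Submodule.smul_mem _ _ (Submodule.subset_span ?_)
  have hdm : deg m ≤ d := le_trans (le_totalDegree hm) hp
  exact ⟨⟨m, mem_expF.mpr hdm⟩, rfl⟩

lemma span_monFam_le_Vle {d : ℕ} :
    Submodule.span F (Set.range (monFam F n d)) ≤ Vle F n d := by
  rw [Submodule.span_le]
  rintro x ⟨m, rfl⟩
  rw [SetLike.mem_coe, mem_Vle, monFam, totalDegree_monomial _ one_ne_zero]
  exact mem_expF.mp m.2

lemma hv_mem_span_monFam {d : ℕ} (q : F) {k : ℕ} {m : Fin n →₀ ℕ} (h : k + deg m ≤ d) :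
    hv F q k m ∈ Submodule.span F (Set.range (monFam F n d)) := by
  rw [hv]
  refine Submodule.sum_mem _ fun i _ => ?_
  have hrw : monomial (m + Finsupp.single i k) (1 + m i • q)
      = (1 + m i • q) • monomial (m + Finsupp.single i k) (1:F) := by
    rw [smul_monomial, smul_eq_mul, mul_one]
  rw [hrw]
  refine Submodule.smul_mem _ _ (Submodule.subset_span ?_)
  refine ⟨⟨m + Finsupp.single i k, mem_expF.mpr ?_⟩, rfl⟩
  rw [deg_add, deg_single]
  omega

lemma totalDegree_hv_le {d : ℕ} (q : F) {k : ℕ} {m : Fin n →₀ ℕ} (h : k + deg m ≤ d) :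
    totalDegree (hv F q k m) ≤ d :=
  span_monFam_le_Vle (hv_mem_span_monFam q h)

end Spans

section Classical

theorem classical_step (d : ℕ) (p : MvP n ℂ) (hp : totalDegree p ≤ d) :
    ∃ g ∈ Submodule.span ℂ (Set.range fun j : ↥(hitIdx n d) => hv ℂ 0 j.1.1 j.1.2),
      ∀ k ∈ Finset.Icc 1 d, dOp ℂ n k (p - g) = 0 := by
  classical
  haveI hfd1 : FiniteDimensional ℂ (Submodule.span ℂ (Set.range (monFam ℂ n d))) :=
    FiniteDimensional.span_of_finite _ (Set.finite_range _)
  haveI hfd : FiniteDimensional ℂ (Vle ℂ n d) :=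
    Submodule.finiteDimensional_of_le (fun p hp => mem_span_monFam hp)
  set hitF : ↥(hitIdx n d) → MvP n ℂ := fun j => hv ℂ 0 j.1.1 j.1.2 with hhitF
  set S := Submodule.span ℂ (Set.range hitF) with hS
  -- the bilinear form on Vle
  set bE : LinearMap.BilinForm ℂ ↥(Vle ℂ n d) := LinearMap.mk₂ ℂ
      (fun x y : ↥(Vle ℂ n d) => formB x.1 y.1)
      (fun a b c => by simp only [Submodule.coe_add]; exact formB_add_left _ _ _)
      (fun t a c => by simp only [Submodule.coe_smul]; exact formB_smul_left _ _ _)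
      (fun a b c => by simp only [Submodule.coe_add]; exact formB_add_right _ _ _)
      (fun t a c => by simp only [Submodule.coe_smul]; exact formB_smul_right _ _ _)
    with hbE
  have hbE_apply : ∀ x y : ↥(Vle ℂ n d), bE x y = formB x.1 y.1 := fun x y => rfl
  have hnd : bE.Nondegenerate := by
    refine LinearMap.BilinForm.Nondegenerate.ofSeparatingLeft ?_
    intro x hx
    have hx1 : (x : MvP n ℂ) = 0 := by
      apply MvPolynomial.ext
      intro m
      rw [coeff_zero]
      by_cases hm : deg m ≤ d
      · have hmem : (monomial m 1 : MvP n ℂ) ∈ Vle ℂ n d := by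
          rw [mem_Vle, totalDegree_monomial _ one_ne_zero]
          exact hm
        have := hx ⟨monomial m 1, hmem⟩
        rw [hbE_apply, formB_monomial_right] at this
        exact (mul_eq_zero.mp this).resolve_left (fact_ne_zero m)
      · by_contra hne
        have := le_totalDegree (p := (x : MvP n ℂ)) (mem_support_iff.mpr hne)
        have hxd : totalDegree (x : MvP n ℂ) ≤ d := x.2
        exact hm (le_trans this hxd)
    exact Subtype.ext hx1
  -- the submodule J
  set J : Submodule ℂ ↥(Vle ℂ n d) := {
    carrier := {x | ∃ g ∈ S, ∀ k ∈ Finset.Icc 1 d, dOp ℂ n k ((x : MvP n ℂ) - g) = 0}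
    add_mem' := by
      rintro a b ⟨ga, hga, ha⟩ ⟨gb, hgb, hb⟩
      refine ⟨ga + gb, Submodule.add_mem _ hga hgb, fun k hk => ?_⟩
      have hre : ((a + b : ↥(Vle ℂ n d)) : MvP n ℂ) - (ga + gb)
          = ((a : MvP n ℂ) - ga) + ((b : MvP n ℂ) - gb) := by
        rw [Submodule.coe_add]; ring
      rw [hre, map_add, ha k hk, hb k hk, add_zero]
    zero_mem' := ⟨0, Submodule.zero_mem _, fun k _ => by simp⟩
    smul_mem' := by
      rintro c a ⟨g, hg, ha⟩
      refine ⟨c • g, Submodule.smul_mem _ _ hg, fun k hk => ?_⟩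
      have hre : ((c • a : ↥(Vle ℂ n d)) : MvP n ℂ) - c • g = c • ((a : MvP n ℂ) - g) := by
        rw [Submodule.coe_smul, smul_sub]
      rw [hre, map_smul, ha k hk, smul_zero] } with hJ
  have hJtop : J = ⊤ := by
    by_contra hne
    obtain ⟨φ, hφne, hφ⟩ :=
      Submodule.exists_dual_map_eq_bot_of_lt_top (lt_top_iff_ne_top.mpr hne) inferInstance
    set v : ↥(Vle ℂ n d) := (bE.toDual hnd).symm φ with hvdef
    have hvz : ∀ j, j ∈ J → formB (v : MvP n ℂ) ((j : ↥(Vle ℂ n d)) : MvP n ℂ) = 0 := by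
      intro j hj
      have h1 : bE v j = φ j := LinearMap.BilinForm.apply_toDual_symm_apply φ j
      have h2 : φ j = 0 := by
        have hmem : φ j ∈ Submodule.map φ J := Submodule.mem_map_of_mem hj
        rwa [hφ, Submodule.mem_bot] at hmem
      rw [← hbE_apply, h1, h2]
    have hvne : (v : MvP n ℂ) ≠ 0 := by
      intro h0
      apply hφne
      have hv0 : v = 0 := Subtype.ext h0
      rw [← LinearEquiv.apply_symm_apply (bE.toDual hnd) φ, ← hvdef, hv0]
      exact map_zero ((bE.toDual hnd) : ↥(Vle ℂ n d) →ₗ[ℂ] Module.Dual ℂ ↥(Vle ℂ n d))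
    have hD : ∀ k ∈ Finset.Icc 1 d, dOp ℂ n k (v : MvP n ℂ) = 0 := by
      intro k hk
      apply MvPolynomial.ext
      intro m
      rw [coeff_zero]
      by_cases hm : k + deg m ≤ d
      · have hmem : (k, m) ∈ hitIdx n d := mem_hitIdx.mpr ⟨(Finset.mem_Icc.mp hk).1, hm⟩
        have hhvV : hv ℂ 0 k m ∈ Vle ℂ n d := by
          rw [mem_Vle]
          exact totalDegree_hv_le 0 hm
        have hjJ : (⟨hv ℂ 0 k m, hhvV⟩ : ↥(Vle ℂ n d)) ∈ J := by
          refine ⟨hv ℂ 0 k m, Submodule.subset_span ⟨⟨(k, m), hmem⟩, rfl⟩, fun k' hk' => ?_⟩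
          rw [sub_self, map_zero]
        have h0 := hvz _ hjJ
        rw [formB_comm, formB_hv0] at h0
        exact (mul_eq_zero.mp h0).resolve_left (fact_ne_zero m)
      · exact coeff_dOp_eq_zero v.2 (by omega)
    set cv : MvP n ℂ := map (starRingEnd ℂ) (v : MvP n ℂ) with hcv
    have hsupp : cv.support ⊆ (v : MvP n ℂ).support := support_map_subset _ _
    have hcvdeg : totalDegree cv ≤ d := le_trans (Finset.sup_mono hsupp) v.2
    have hcvJ : (⟨cv, hcvdeg⟩ : ↥(Vle ℂ n d)) ∈ J := by
      refine ⟨0, Submodule.zero_mem _, fun k hk => ?_⟩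
      show dOp ℂ n k (cv - 0) = 0
      rw [sub_zero]
      show dOp ℂ n k (map (starRingEnd ℂ) (v : MvP n ℂ)) = 0
      rw [← map_dOp, hD k hk, map_zero]
    have h0 := hvz _ hcvJ
    rw [formB_def] at h0
    have hterms : ∀ m ∈ (v : MvP n ℂ).support,
        fact ℂ m * coeff m (v : MvP n ℂ) * coeff m cv
        = ((((∏ i, ((m i).factorial : ℝ)) * Complex.normSq (coeff m (v : MvP n ℂ))) : ℝ) : ℂ) := by
      intro m _
      have hcoeff : coeff m cv = (starRingEnd ℂ) (coeff m (v : MvP n ℂ)) := coeff_map _ _ _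
      rw [hcoeff, mul_assoc, Complex.mul_conj, fact]
      push_cast
      ring
    rw [Finset.sum_congr rfl hterms, ← Complex.ofReal_sum] at h0
    have hsum0 := Complex.ofReal_eq_zero.mp h0
    obtain ⟨m0, hm0⟩ := (MvPolynomial.support_nonempty).mpr hvne
    have hterm0 := (Finset.sum_eq_zero_iff_of_nonneg fun m _ =>
      mul_nonneg (Finset.prod_nonneg fun i _ => Nat.cast_nonneg _)
        (Complex.normSq_nonneg _)).mp hsum0 m0 hm0
    have hfne : (∏ i, (((m0 i).factorial : ℝ))) ≠ 0 :=
      Finset.prod_ne_zero_iff.mpr fun i _ => Nat.cast_ne_zero.mpr (Nat.factorial_ne_zero _)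
    have hnsq : Complex.normSq (coeff m0 (v : MvP n ℂ)) = 0 :=
      (mul_eq_zero.mp hterm0).resolve_left hfne
    exact (mem_support_iff.mp hm0) (Complex.normSq_eq_zero.mp hnsq)
  have hpJ : (⟨p, hp⟩ : ↥(Vle ℂ n d)) ∈ J := by rw [hJtop]; exact Submodule.mem_top
  obtain ⟨g, hg, hgk⟩ := hpJ
  exact ⟨g, hg, hgk⟩

end Classical

section Transfer

variable {R S : Type*} [CommRing R] [CommRing S]

def mapPiSL (φ : R →+* S) (n d : ℕ) : (Fin d → MvP n R) →ₛₗ[φ] (Fin d → MvP n S) where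
  toFun v k := map φ (v k)
  map_add' a b := funext fun k => by simp only [Pi.add_apply, map_add]
  map_smul' c v := funext fun k => by
    simp only [Pi.smul_apply, RingHom.id_apply]
    exact map_smul_C φ c (v k)

lemma mapPiSL_apply (φ : R →+* S) {n d : ℕ} (v : Fin d → MvP n R) (k : Fin d) :
    mapPiSL φ n d v k = map φ (v k) := rfl

lemma mapPiSL_injective (φ : R →+* S) (hφ : Function.Injective φ) {d : ℕ} :
    Function.Injective (mapPiSL φ n d) := by
  intro a b h
  funext k
  exact MvPolynomial.map_injective φ hφ (congrFun h k)

lemma mapPiSL_NOp (φ : R →+* S) {d : ℕ} (f : MvP n R) :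
    mapPiSL φ n d (NOp R n d f) = NOp S n d (map φ f) := by
  funext k
  rw [mapPiSL_apply, NOp_apply, NOp_apply, map_dOp]

abbrev Aq : Type := Polynomial ℂ
abbrev Kq : Type := RatFunc ℂ

def φ0 : Aq →+* ℂ := Polynomial.evalRingHom 0
def φX : Aq →+* Kq := algebraMap _ _
def φCK : ℂ →+* Kq := φX.comp Polynomial.C

lemma φX_injective : Function.Injective φX := IsFractionRing.injective Aq Kq

lemma φCK_injective : Function.Injective φCK := φCK.injective

lemma indep_up {r d : ℕ} (w : Fin r → (Fin d → MvP n Aq))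
    (h0 : LinearIndependent ℂ fun j => mapPiSL φ0 n d (w j)) :
    LinearIndependent Kq fun j => mapPiSL φX n d (w j) := by
  rw [Fintype.linearIndependent_iff] at h0 ⊢
  intro c hc
  by_contra hcn
  push_neg at hcn
  obtain ⟨j0, hj0⟩ := hcn
  set a : Fin r → Aq :=
    fun j => (c j).num * ∏ j' ∈ Finset.univ.erase j, (c j').denom with ha
  set b : Aq := ∏ j, (c j).denom with hb
  have key : ∀ j, φX b * c j = φX (a j) := by
    intro j
    rw [hb, ← Finset.mul_prod_erase Finset.univ _ (Finset.mem_univ j), map_mul,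
      mul_right_comm]
    have hdc : φX ((c j).denom) * c j = φX ((c j).num) := by
      have hd0 : (algebraMap Aq Kq) ((c j).denom) ≠ 0 :=
        RatFunc.algebraMap_ne_zero (RatFunc.denom_ne_zero _)
      have h7 := (div_eq_iff hd0).mp (RatFunc.num_div_denom (c j))
      rw [mul_comm]
      exact h7.symm
    rw [hdc, ha, map_mul]
  have hrel : ∑ j, a j • w j = 0 := by
    apply mapPiSL_injective φX φX_injective
    rw [map_sum, map_zero]
    calc ∑ j, mapPiSL φX n d (a j • w j)
        = ∑ j, φX b • (c j • mapPiSL φX n d (w j)) := by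
          refine Finset.sum_congr rfl fun j _ => ?_
          rw [LinearMap.map_smulₛₗ, smul_smul, key j]
      _ = φX b • ∑ j, c j • mapPiSL φX n d (w j) := (Finset.smul_sum).symm
      _ = 0 := by rw [hc, smul_zero]
  have haj0 : a j0 ≠ 0 :=
    mul_ne_zero (RatFunc.num_ne_zero hj0)
      (Finset.prod_ne_zero_iff.mpr fun _ _ => RatFunc.denom_ne_zero _)
  classical
  set t := Finset.univ.filter (fun j => a j ≠ 0) with ht
  have htne : t.Nonempty := ⟨j0, Finset.mem_filter.mpr ⟨Finset.mem_univ _, haj0⟩⟩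
  set img := t.image fun j => Polynomial.rootMultiplicity 0 (a j) with himg
  have himgne : img.Nonempty := htne.image _
  set μ := img.min' himgne with hμ
  obtain ⟨j1, hj1t, hj1⟩ := Finset.mem_image.mp (img.min'_mem himgne)
  have hj1ne : a j1 ≠ 0 := (Finset.mem_filter.mp hj1t).2
  have hdvd : ∀ j, Polynomial.X ^ μ ∣ a j := by
    intro j
    by_cases hj : a j = 0
    · rw [hj]; exact dvd_zero _
    · have hle : μ ≤ Polynomial.rootMultiplicity 0 (a j) :=
        img.min'_le _ (Finset.mem_image_of_mem _
          (Finset.mem_filter.mpr ⟨Finset.mem_univ _, hj⟩))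
      refine dvd_trans (pow_dvd_pow _ hle) ?_
      have := Polynomial.pow_rootMultiplicity_dvd (a j) 0
      simpa using this
  set a' : Fin r → Aq := fun j => a j / Polynomial.X ^ μ with ha'
  have hXa : ∀ j, Polynomial.X ^ μ * a' j = a j := fun j =>
    EuclideanDomain.mul_div_cancel' (pow_ne_zero _ Polynomial.X_ne_zero) (hdvd j)
  have hrel' : ∑ j, a' j • w j = 0 := by
    have h1 : (Polynomial.X ^ μ : Aq) • ∑ j, a' j • w j = 0 := by
      rw [Finset.smul_sum, ← hrel]
      exact Finset.sum_congr rfl fun j _ => by rw [smul_smul, hXa j]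
    funext k
    have h2 := congrFun h1 k
    rw [Pi.smul_apply, Pi.zero_apply, smul_eq_C_mul] at h2
    rcases mul_eq_zero.mp h2 with h4 | h4
    · exact absurd h4 (by
        simp only [ne_eq, MvPolynomial.C_eq_zero]
        exact pow_ne_zero _ Polynomial.X_ne_zero)
    · exact h4
  have hall : ∀ j, φ0 (a' j) = 0 := by
    apply h0
    calc ∑ j, φ0 (a' j) • mapPiSL φ0 n d (w j)
        = ∑ j, mapPiSL φ0 n d (a' j • w j) :=
          Finset.sum_congr rfl fun j _ => (LinearMap.map_smulₛₗ _ _ _).symm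
      _ = mapPiSL φ0 n d (∑ j, a' j • w j) := (map_sum _ _ _).symm
      _ = 0 := by rw [hrel', map_zero]
  have hdvd1 : Polynomial.X ∣ a' j1 := by
    have h5 := hall j1
    have h6 : Polynomial.IsRoot (a' j1) 0 := by
      rw [Polynomial.IsRoot]
      exact h5
    have := (Polynomial.dvd_iff_isRoot).mpr h6
    simpa using this
  obtain ⟨e, he⟩ := hdvd1
  have hdvd2 : Polynomial.X ^ (μ + 1) ∣ a j1 := ⟨e, by rw [← hXa j1, he]; ring⟩
  have hle2 : μ + 1 ≤ Polynomial.rootMultiplicity 0 (a j1) :=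
    (Polynomial.le_rootMultiplicity_iff hj1ne).mpr (by simpa using hdvd2)
  omega

lemma indep_down {r d : ℕ} (w : Fin r → (Fin d → MvP n ℂ))
    (h : LinearIndependent Kq fun j => mapPiSL φCK n d (w j)) :
    LinearIndependent ℂ w := by
  rw [Fintype.linearIndependent_iff] at h ⊢
  intro c hc j
  have hz : ∀ j, φCK (c j) = 0 := by
    apply h
    calc ∑ j, φCK (c j) • mapPiSL φCK n d (w j)
        = ∑ j, mapPiSL φCK n d (c j • w j) :=
          Finset.sum_congr rfl fun j _ => (LinearMap.map_smulₛₗ _ _ _).symm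
      _ = mapPiSL φCK n d (∑ j, c j • w j) := (map_sum _ _ _).symm
      _ = 0 := by rw [hc, map_zero]
  exact φCK_injective (by rw [hz j, map_zero])

lemma exists_fin_subfamily {F M ι : Type*} [Field F] [AddCommGroup M] [Module F M] [Fintype ι]
    (u : ι → M) :
    ∃ g : Fin (Module.finrank F (Submodule.span F (Set.range u))) → ι,
      LinearIndependent F (u ∘ g) := by
  classical
  obtain ⟨b, hbsub, hbspan, hbind⟩ := exists_linearIndependent F (Set.range u)
  have hfin : b.Finite := by
    rw [← Set.finite_coe_iff]
    refine hbind.finite_of_le_span_finite _ (Set.finite_range u).toFinset ?_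
    intro x hx
    obtain ⟨y, rfl⟩ := hx
    rw [Set.Finite.coe_toFinset]
    rw [← hbspan]
    exact Submodule.subset_span y.2
  haveI := hfin.fintype
  have hcard : Module.finrank F (Submodule.span F (Set.range u)) = b.toFinset.card := by
    rw [← hbspan, finrank_span_set_eq_card hbind]
  have hcard2 : Fintype.card ↥b = Module.finrank F (Submodule.span F (Set.range u)) := by
    rw [hcard, Set.toFinset_card]
  obtain e := Fintype.equivFinOfCardEq hcard2
  choose f hf using fun x : ↥b => hbsub x.2
  refine ⟨f ∘ e.symm, ?_⟩
  rw [show u ∘ (f ∘ e.symm) = ((↑) : b → M) ∘ e.symm from funext fun j => hf (e.symm j)]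
  exact hbind.comp e.symm e.symm.injective

lemma le_finrank_of_indep {F M ι : Type*} [Field F] [AddCommGroup M] [Module F M] [Fintype ι]
    {u : ι → M} {r : ℕ} {g : Fin r → ι} (h : LinearIndependent F (u ∘ g)) :
    r ≤ Module.finrank F (Submodule.span F (Set.range u)) := by
  haveI : FiniteDimensional F (Submodule.span F (Set.range u)) :=
    FiniteDimensional.span_of_finite _ (Set.finite_range u)
  calc r = Fintype.card (Fin r) := (Fintype.card_fin r).symm
    _ = Module.finrank F (Submodule.span F (Set.range (u ∘ g))) :=
        (finrank_span_eq_card h).symm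
    _ ≤ _ := Submodule.finrank_mono (Submodule.span_mono (Set.range_comp_subset_range g u))

lemma NOp_span_mem {R : Type*} [CommRing R] {ι : Type*} (u : ι → MvP n R) {f : MvP n R} (d : ℕ)
    (hf : f ∈ Submodule.span R (Set.range u)) :
    NOp R n d f ∈ Submodule.span R (Set.range fun i => NOp R n d (u i)) := by
  have heq : Submodule.span R (Set.range fun i => NOp R n d (u i))
      = Submodule.map (NOp R n d) (Submodule.span R (Set.range u)) := by
    rw [Submodule.map_span]
    congr 1
    rw [← Set.range_comp]
    rfl
  rw [heq]
  exact Submodule.mem_map_of_mem hf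

end Transfer

end

end QHitProof

open QHitProof in
/-- Over `K = ℂ(q)` with `q` the indeterminate, every polynomial is the
sum of a `q`-hit polynomial and a classical-harmonic (i.e. `0`-harmonic) polynomial. -/
theorem qHit_add_classicalHarmonic_eq_top (n : ℕ) (hn : 1 ≤ n)
    (p : MvPolynomial (Fin n) (RatFunc ℂ)) :
    ∃ h ∈ qHit (RatFunc ℂ) RatFunc.X n,
      ∃ s : MvPolynomial (Fin n) (RatFunc ℂ),
        IsQHarmonic (0 : RatFunc ℂ) s ∧ p = h + s := by
  classical
  set d := p.totalDegree with hd
  have memIdx : ∀ j : ↥(hitIdx n d), 1 ≤ j.1.1 ∧ j.1.1 + deg j.1.2 ≤ d := by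
    intro j
    have hj2 : (j.1.1, j.1.2) ∈ hitIdx n d := by rw [Prod.mk.eta]; exact j.2
    exact mem_hitIdx.mp hj2
  -- families
  set hvK : ↥(hitIdx n d) → MvP n Kq := fun j => hv Kq RatFunc.X j.1.1 j.1.2 with hhvK
  set hitA : ↥(hitIdx n d) → (Fin d → MvP n Aq) :=
    fun j => NOp Aq n d (hv Aq Polynomial.X j.1.1 j.1.2) with hhitA
  set hitK : ↥(hitIdx n d) → (Fin d → MvP n Kq) := fun j => NOp Kq n d (hvK j) with hhitK
  set hitC : ↥(hitIdx n d) → (Fin d → MvP n ℂ) :=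
    fun j => NOp ℂ n d (hv ℂ 0 j.1.1 j.1.2) with hhitC
  set monC : ↥(expF n d) → (Fin d → MvP n ℂ) :=
    fun m => NOp ℂ n d (monFam ℂ n d m) with hmonC
  set monK : ↥(expF n d) → (Fin d → MvP n Kq) :=
    fun m => NOp Kq n d (monFam Kq n d m) with hmonK
  have hφ0X : φ0 Polynomial.X = 0 := by simp [φ0]
  have hφXX : φX Polynomial.X = RatFunc.X := RatFunc.algebraMap_X
  have hcompatX : ∀ j, mapPiSL φX n d (hitA j) = hitK j := by
    intro j
    rw [hhitA, hhitK, mapPiSL_NOp, map_hv, hφXX]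
  have hcompat0 : ∀ j, mapPiSL φ0 n d (hitA j) = hitC j := by
    intro j
    rw [hhitA, hhitC, mapPiSL_NOp, map_hv, hφ0X]
  have hcompatm : ∀ m, mapPiSL φCK n d (monC m) = monK m := by
    intro m
    rw [hmonC, hmonK, mapPiSL_NOp]
    show NOp Kq n d (map φCK (monomial m.1 1)) = NOp Kq n d (monomial m.1 1)
    rw [map_monomial, map_one]
  -- S1 : hit span inside monomial span, over Kq
  have hS1 : Submodule.span Kq (Set.range hitK) ≤ Submodule.span Kq (Set.range monK) := by
    rw [Submodule.span_le]
    rintro x ⟨j, rfl⟩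
    exact NOp_span_mem (monFam Kq n d) d (hv_mem_span_monFam RatFunc.X (memIdx j).2)
  -- S2 : classical inclusion over ℂ
  have hS2 : Submodule.span ℂ (Set.range monC) ≤ Submodule.span ℂ (Set.range hitC) := by
    rw [Submodule.span_le]
    rintro x ⟨m, rfl⟩
    obtain ⟨g, hg, hgk⟩ := classical_step d (monomial m.1 1)
      (le_of_eq_of_le (totalDegree_monomial _ one_ne_zero) (mem_expF.mp m.2))
    have hNg : NOp ℂ n d (monFam ℂ n d m) = NOp ℂ n d g := by
      funext k
      rw [NOp_apply, NOp_apply]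
      have hk := hgk (k.1 + 1) (Finset.mem_Icc.mpr ⟨Nat.le_add_left 1 k.1, k.2⟩)
      rw [map_sub] at hk
      exact sub_eq_zero.mp hk
    rw [hmonC]
    show NOp ℂ n d (monFam ℂ n d m) ∈ _
    rw [hNg]
    exact NOp_span_mem _ d hg
  -- finrank instances
  haveI : FiniteDimensional Kq (Submodule.span Kq (Set.range monK)) :=
    FiniteDimensional.span_of_finite _ (Set.finite_range _)
  haveI : FiniteDimensional Kq (Submodule.span Kq (Set.range hitK)) :=
    FiniteDimensional.span_of_finite _ (Set.finite_range _)
  haveI : FiniteDimensional ℂ (Submodule.span ℂ (Set.range hitC)) :=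
    FiniteDimensional.span_of_finite _ (Set.finite_range _)
  -- the rank chain
  have hchain : Module.finrank Kq (Submodule.span Kq (Set.range monK))
      ≤ Module.finrank Kq (Submodule.span Kq (Set.range hitK)) := by
    obtain ⟨g1, hg1⟩ := exists_fin_subfamily (F := Kq) monK
    have hg1' : LinearIndependent ℂ (monC ∘ g1) := by
      apply indep_down
      have heq : (fun j => mapPiSL φCK n d ((monC ∘ g1) j)) = monK ∘ g1 :=
        funext fun j => hcompatm (g1 j)
      rw [heq]
      exact hg1
    have h1 : Module.finrank Kq (Submodule.span Kq (Set.range monK))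
        ≤ Module.finrank ℂ (Submodule.span ℂ (Set.range monC)) := le_finrank_of_indep hg1'
    have h2 : Module.finrank ℂ (Submodule.span ℂ (Set.range monC))
        ≤ Module.finrank ℂ (Submodule.span ℂ (Set.range hitC)) :=
      Submodule.finrank_mono hS2
    obtain ⟨g2, hg2⟩ := exists_fin_subfamily (F := ℂ) hitC
    have hg2' : LinearIndependent Kq (hitK ∘ g2) := by
      have hup := indep_up (fun j => hitA (g2 j)) (by
        rw [show (fun j => mapPiSL φ0 n d (hitA (g2 j))) = hitC ∘ g2 from
          funext fun j => hcompat0 (g2 j)]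
        exact hg2)
      rwa [show (fun j => mapPiSL φX n d (hitA (g2 j))) = hitK ∘ g2 from
        funext fun j => hcompatX (g2 j)] at hup
    have h3 : Module.finrank ℂ (Submodule.span ℂ (Set.range hitC))
        ≤ Module.finrank Kq (Submodule.span Kq (Set.range hitK)) := le_finrank_of_indep hg2'
    omega
  have hspan_eq : Submodule.span Kq (Set.range hitK) = Submodule.span Kq (Set.range monK) :=
    Submodule.eq_of_le_of_finrank_le hS1 hchain
  -- p's image
  have hpN : NOp Kq n d p ∈ Submodule.span Kq (Set.range monK) :=
    NOp_span_mem (monFam Kq n d) d (mem_span_monFam le_rfl)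
  rw [← hspan_eq] at hpN
  have hmapeq : Submodule.span Kq (Set.range hitK)
      = Submodule.map (NOp Kq n d) (Submodule.span Kq (Set.range hvK)) := by
    rw [Submodule.map_span]
    congr 1
    rw [← Set.range_comp]
    rfl
  rw [hmapeq] at hpN
  obtain ⟨h, hh, hNh⟩ := hpN
  have hsubqHit : Submodule.span Kq (Set.range hvK) ≤ qHit Kq RatFunc.X n := by
    refine Submodule.span_le.mpr ?_
    rintro x ⟨j, rfl⟩
    refine Submodule.subset_span ?_
    refine Set.mem_iUnion₂.mpr ⟨j.1.1, (memIdx j).1, ?_⟩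
    exact ⟨monomial j.1.2 1, steenrodP_monomial _ _ _⟩
  have hdegh : totalDegree h ≤ d := by
    have hle : Submodule.span Kq (Set.range hvK) ≤ Vle Kq n d := by
      refine le_trans ?_ span_monFam_le_Vle
      refine Submodule.span_le.mpr ?_
      rintro x ⟨j, rfl⟩
      exact hv_mem_span_monFam RatFunc.X (memIdx j).2
    exact (mem_Vle).mp (hle hh)
  refine ⟨h, hsubqHit hh, p - h, ?_, by ring⟩
  intro k hk
  rw [steenrodPdual_zero]
  by_cases hkd : k ≤ d
  · have hcomp := congrFun hNh ⟨k - 1, by omega⟩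
    rw [NOp_apply, NOp_apply] at hcomp
    have hk1 : (k - 1) + 1 = k := by omega
    rw [hk1] at hcomp
    rw [map_sub, hcomp, sub_self]
  · have hdeg : totalDegree (p - h) ≤ d := by
      have : p - h ∈ Vle Kq n d := Submodule.sub_mem _ ((mem_Vle).mpr le_rfl) ((mem_Vle).mpr hdegh)
      exact (mem_Vle).mp this
    exact dOp_eq_zero_of_lt (by omega)
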